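/- Let (A(t))_{t∈ℕ} be a sequence of n×n nonnegative real matrices, each having a positive diagonal (all diagonal entries strictly positive). Then there exists a strictly increasing sequence of natural numbers 0 < t_0 < t_1 < t_2 < ... such that for every i ∈ ℕ the backward accumulation A(t_{i+1}, t_i) has the same zero pattern as A(t_1, t_0); that is, for all indices a, b one has (A(t_{i+1}, t_i))_{ab} > 0 if and only if (A(t_1, t_0))_{ab} > 0. -/

import Mathlib

open Matrix

/-- Backward accumulation `A(t,s) = A(t-1) * A(t-2) * ⋯ * A(s)`
(with `backAcc A s s` the identity matrix). -/
def backAcc {n : ℕ} (A : ℕ → Matrix (Fin n) (Fin n) ℝ) (s t : ℕ) :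
    Matrix (Fin n) (Fin n) ℝ :=
  ((List.range' s (t - s)).reverse.map A).prod

section Aux

variable {n : ℕ} (A : ℕ → Matrix (Fin n) (Fin n) ℝ)

lemma backAcc_self (s : ℕ) : backAcc A s s = 1 := by simp [backAcc]

lemma backAcc_succ {s t : ℕ} (h : s ≤ t) :
    backAcc A s (t + 1) = A t * backAcc A s t := by
  have h1 : t + 1 - s = (t - s) + 1 := by omega
  have h2 : s + (t - s) = t := by omega
  simp [backAcc, h1, List.range'_1_concat, h2]

lemma backAcc_split {s m t : ℕ} (h1 : s ≤ m) (h2 : m ≤ t) :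
    backAcc A s t = backAcc A m t * backAcc A s m := by
  have : List.range' s (m - s) ++ List.range' m (t - m) = List.range' s (t - s) := by
    have := @List.range'_append_1 s (m - s) (t - m)
    rw [show s + (m-s) = m by omega, show m - s + (t - m) = t - s by omega] at this
    exact this
  rw [backAcc, ← this]
  simp [backAcc]

lemma mul_entry_pos {M N : Matrix (Fin n) (Fin n) ℝ}
    (hM : ∀ i j, 0 ≤ M i j) (hN : ∀ i j, 0 ≤ N i j) {a c b : Fin n}
    (h1 : 0 < M a c) (h2 : 0 < N c b) : 0 < (M * N) a b := by
  rw [Matrix.mul_apply]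
  exact Finset.sum_pos' (fun i _ => mul_nonneg (hM a i) (hN i b))
    ⟨c, Finset.mem_univ c, mul_pos h1 h2⟩

variable (hnonneg : ∀ t i j, 0 ≤ A t i j) (hdiag : ∀ t i, 0 < A t i i)

include hnonneg in
lemma backAcc_nonneg (s t : ℕ) (a b : Fin n) : 0 ≤ backAcc A s t a b := by
  induction t generalizing a b with
  | zero =>
    have : (0 : ℕ) - s = 0 := by omega
    simp [backAcc, this, Matrix.one_apply]
    positivity
  | succ t ih =>
    rcases le_or_gt s t with h | h
    · rw [backAcc_succ A h, Matrix.mul_apply]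
      exact Finset.sum_nonneg fun i _ => mul_nonneg (hnonneg t a i) (ih i b)
    · have : t + 1 - s = 0 := by omega
      simp [backAcc, this, Matrix.one_apply]
      positivity

include hnonneg hdiag in
lemma backAcc_diag_pos (s t : ℕ) (a : Fin n) : 0 < backAcc A s t a a := by
  induction t with
  | zero =>
    have : (0 : ℕ) - s = 0 := by
      omega
    simp [backAcc, this, Matrix.one_apply]
  | succ t ih =>
    rcases le_or_gt s t with h | h
    · rw [backAcc_succ A h]
      exact mul_entry_pos (hnonneg t) (backAcc_nonneg A hnonneg s t) (hdiag t a) ih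
    · have : t + 1 - s = 0 := by omega
      simp [backAcc, this, Matrix.one_apply]

include hnonneg hdiag in
lemma backAcc_pos_mono_right {s t t' : ℕ} (hst : s ≤ t) (htt' : t ≤ t') {a b : Fin n}
    (h : 0 < backAcc A s t a b) : 0 < backAcc A s t' a b := by
  induction t' with
  | zero =>
    have : t = 0 := by omega
    subst this; exact h
  | succ t' ih =>
    rcases Nat.lt_or_ge t (t' + 1) with hlt | hge
    · have ht' : t ≤ t' := by omega
      have hst' : s ≤ t' := le_trans hst ht'
      rw [backAcc_succ A hst']
      exact mul_entry_pos (hnonneg t') (backAcc_nonneg A hnonneg s t') (hdiag t' a) (ih ht')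
    · have : t = t' + 1 := by omega
      subst this; exact h

include hnonneg hdiag in
lemma backAcc_pos_mono_left {s m t : ℕ} (hsm : s ≤ m) (hmt : m ≤ t) {a b : Fin n}
    (h : 0 < backAcc A m t a b) : 0 < backAcc A s t a b := by
  rw [backAcc_split A hsm hmt]
  exact mul_entry_pos (backAcc_nonneg A hnonneg m t) (backAcc_nonneg A hnonneg s m)
    h (backAcc_diag_pos A hnonneg hdiag s m b)

end Aux

/-- A bounded monotone function `ℕ → ℕ` stabilizes. -/
lemma nat_mono_stab (f : ℕ → ℕ) (hf : Monotone f) (B : ℕ) (hB : ∀ t, f t ≤ B) :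
    ∃ N, ∀ m, N ≤ m → f m = f N := by
  have hne : (Set.range f).Nonempty := ⟨f 0, 0, rfl⟩
  have hbdd : BddAbove (Set.range f) := ⟨B, by rintro x ⟨t, rfl⟩; exact hB t⟩
  obtain ⟨N, hN⟩ := Nat.sSup_mem hne hbdd
  refine ⟨N, fun m hm => le_antisymm ?_ (hf hm)⟩
  rw [hN]
  exact le_csSup hbdd ⟨m, rfl⟩

/-- A monotone sequence of finsets of a finite type stabilizes. -/
lemma finset_mono_stab {α : Type*} [Fintype α] [DecidableEq α] (f : ℕ → Finset α)
    (hf : Monotone f) : ∃ N, ∀ m, N ≤ m → f m = f N := by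
  obtain ⟨N, hN⟩ := nat_mono_stab (fun t => (f t).card)
    (fun s t h => Finset.card_le_card (hf h)) (Fintype.card α)
    (fun t => (f t).card_le_univ)
  exact ⟨N, fun m hm => ((Finset.eq_of_subset_of_card_le (hf hm) (hN m hm).le).symm)⟩

/-- For a sequence of nonnegative matrices with positive diagonals there is a
strictly increasing sequence of times `0 < t 0 < t 1 < ⋯` such that all the
backward accumulations `A(t (i+1), t i)` have the same zero pattern. -/
theorem statement0 {n : ℕ} (A : ℕ → Matrix (Fin n) (Fin n) ℝ)
    (hnonneg : ∀ t i j, 0 ≤ A t i j)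
    (hdiag : ∀ t i, 0 < A t i i) :
    ∃ t : ℕ → ℕ, 0 < t 0 ∧ StrictMono t ∧
      ∀ i : ℕ, ∀ a b : Fin n,
        0 < backAcc A (t i) (t (i + 1)) a b ↔ 0 < backAcc A (t 0) (t 1) a b := by
  classical
  -- the zero pattern of `backAcc A s t`
  set P : ℕ → ℕ → Finset (Fin n × Fin n) :=
    fun s t => Finset.univ.filter (fun p => 0 < backAcc A s t p.1 p.2) with hP
  have hPmem : ∀ s t (p : Fin n × Fin n), p ∈ P s t ↔ 0 < backAcc A s t p.1 p.2 := by
    intro s t p; simp [hP]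
  -- monotone in the right endpoint
  have hPr : ∀ {s t t' : ℕ}, s ≤ t → t ≤ t' → P s t ⊆ P s t' := by
    intro s t t' h1 h2 p hp
    rw [hPmem] at *
    exact backAcc_pos_mono_right A hnonneg hdiag h1 h2 hp
  -- antitone in the left endpoint
  have hPl : ∀ {s m t : ℕ}, s ≤ m → m ≤ t → P m t ⊆ P s t := by
    intro s m t h1 h2 p hp
    rw [hPmem] at *
    exact backAcc_pos_mono_left A hnonneg hdiag h1 h2 hp
  -- for every `s` there is a `T s > s` after which the pattern stabilizes
  have hT : ∀ s : ℕ, ∃ T, s < T ∧ ∀ u, T ≤ u → P s u = P s T := by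
    intro s
    obtain ⟨N, hN⟩ := finset_mono_stab (fun k => P s (s + 1 + k))
      (fun k k' hk => hPr (by omega) (by omega))
    refine ⟨s + 1 + N, by omega, fun u hu => ?_⟩
    have : u = s + 1 + (u - s - 1) := by omega
    rw [this]
    exact hN _ (by omega)
  choose T hTlt hTstab using hT
  -- the limit pattern
  set L : ℕ → Finset (Fin n × Fin n) := fun s => P s (T s) with hL
  -- `L` is antitone
  have hLanti : ∀ {s s' : ℕ}, s ≤ s' → L s' ⊆ L s := by
    intro s s' h
    have h1 : T s ≤ max (T s) (T s') := le_max_left _ _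
    have h2 : T s' ≤ max (T s) (T s') := le_max_right _ _
    rw [hL]
    dsimp only
    rw [← hTstab s _ h1, ← hTstab s' _ h2]
    exact hPl h (le_trans (hTlt s').le h2)
  -- `L` stabilizes
  obtain ⟨s0', hs0'⟩ := finset_mono_stab (fun s => (L s)ᶜ)
    (fun s s' h => Finset.compl_subset_compl.mpr (hLanti h))
  have hLstab : ∀ s, s0' ≤ s → L s = L s0' := by
    intro s hs
    have := hs0' s hs
    exact compl_injective this
  -- construct the sequence of times
  set t : ℕ → ℕ := fun i => Nat.rec (s0' + 1) (fun _ prev => T prev) i with ht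
  have ht0 : t 0 = s0' + 1 := rfl
  have htsucc : ∀ i, t (i + 1) = T (t i) := fun i => rfl
  have htmono : StrictMono t := strictMono_nat_of_lt_succ fun i => by
    rw [htsucc]; exact hTlt (t i)
  have htge : ∀ i, s0' ≤ t i := by
    intro i
    have := htmono.le_iff_le.mpr (Nat.zero_le i)
    omega
  -- each consecutive pattern is the limit pattern
  have hPat : ∀ i, P (t i) (t (i + 1)) = L s0' := by
    intro i
    rw [htsucc]
    exact hLstab (t i) (htge i)
  refine ⟨t, by omega, htmono, fun i a b => ?_⟩
  have h1 := hPat i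
  have h2 := hPat 0
  have : P (t i) (t (i + 1)) = P (t 0) (t 1) := h1.trans (hPat 0).symm
  have := Finset.ext_iff.mp this (a, b)
  rwa [hPmem, hPmem] at this
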